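/- Assume MD, SCD*, and the boundary assumptions. Suppose there exists a nonempty bundle b_r such that: (1) t_{b_r} < t_b for every nonempty bundle b ≠ b_r (b_r has the strictly largest sold-alone quantity); and (2) for every bundle b with ¬(b_r ⊆ b), φ(b,t1) < φ(b_r,t1) (the top type values every bundle not containing b_r strictly below b_r). Then the minimal optimal menu is either a tree menu or a nested menu. -/

import Mathlib

namespace Paper

abbrev Bundle (n : ℕ) := Finset (Fin n)

variable {n : ℕ}

/-- A stochastic bundle: nonnegative weights on bundles summing to one. -/
def IsStoch (a : Bundle n → ℝ) : Prop :=
  (∀ b, 0 ≤ a b) ∧ ∑ b, a b = 1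

/-- The point mass at a bundle, viewed as a stochastic bundle. -/
def pt (b : Bundle n) : Bundle n → ℝ := fun b' => if b' = b then 1 else 0

/-- Virtual value of a stochastic bundle (linear extension). -/
def phiA (φ : Bundle n → ℝ → ℝ) (a : Bundle n → ℝ) (t : ℝ) : ℝ :=
  ∑ b, a b * φ b t

/-- A function is single-crossing on a set: its sign is monotone there. -/
def SingleCrossingOn (g : ℝ → ℝ) (T : Set ℝ) : Prop :=
  MonotoneOn (fun t => Real.sign (g t)) T ∨ AntitoneOn (fun t => Real.sign (g t)) T

/-- Assumption SCD*: differences of virtual values of stochastic bundles are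
single-crossing in the type. -/
def SCDstar (φ : Bundle n → ℝ → ℝ) (t0 t1 : ℝ) : Prop :=
  ∀ a a' : Bundle n → ℝ, IsStoch a → IsStoch a' →
    SingleCrossingOn (fun t => phiA φ a t - phiA φ a' t) (Set.Icc t0 t1)

/-- Assumption MD: differences of virtual values of deterministic bundles are
monotone in the type. -/
def MD (φ : Bundle n → ℝ → ℝ) (t0 t1 : ℝ) : Prop :=
  ∀ b b' : Bundle n,
    MonotoneOn (fun t => φ b t - φ b' t) (Set.Icc t0 t1) ∨
    AntitoneOn (fun t => φ b t - φ b' t) (Set.Icc t0 t1)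

/-- No two distinct bundles have identical virtual value functions on T. -/
def Distinct (φ : Bundle n → ℝ → ℝ) (t0 t1 : ℝ) : Prop :=
  ∀ b b' : Bundle n, b ≠ b' → ∃ t ∈ Set.Icc t0 t1, φ b t ≠ φ b' t

/-- A stochastic bundle is very weakly dominated. -/
def VWD (φ : Bundle n → ℝ → ℝ) (t0 t1 : ℝ) (a : Bundle n → ℝ) : Prop :=
  ∃ a' : Bundle n → ℝ, IsStoch a' ∧ a' ≠ a ∧
    ∀ t ∈ Set.Icc t0 t1, phiA φ a t ≤ phiA φ a' t

/-- A bundle is a never strict best response. -/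
def NeverStrictBR (φ : Bundle n → ℝ → ℝ) (t0 t1 : ℝ) (b : Bundle n) : Prop :=
  ∀ t ∈ Set.Icc t0 t1, ∃ b' : Bundle n, b' ≠ b ∧ φ b t ≤ φ b' t

/-- A menu is optimal if at every type some element attains the upper envelope. -/
def OptimalMenu (φ : Bundle n → ℝ → ℝ) (t0 t1 : ℝ) (S : Finset (Bundle n)) : Prop :=
  ∀ t ∈ Set.Icc t0 t1, ∃ b ∈ S, ∀ b' : Bundle n, φ b' t ≤ φ b t

/-- A minimal optimal menu. -/
def MinimalOptimalMenu (φ : Bundle n → ℝ → ℝ) (t0 t1 : ℝ) (S : Finset (Bundle n)) : Prop :=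
  OptimalMenu φ t0 t1 S ∧ ∀ S' : Finset (Bundle n), S' ⊂ S → ¬ OptimalMenu φ t0 t1 S'

/-- A nested menu: any two elements are comparable under set inclusion. -/
def IsNestedMenu (S : Finset (Bundle n)) : Prop :=
  ∀ b1 ∈ S, ∀ b2 ∈ S, b1 ⊆ b2 ∨ b2 ⊆ b1

/-- A tree menu: a nonempty root contained in every nonempty element, and two
incomparable elements. -/
def IsTreeMenu (S : Finset (Bundle n)) : Prop :=
  (∃ r ∈ S, r ≠ (∅ : Bundle n) ∧ ∀ b ∈ S, b ≠ (∅ : Bundle n) → r ⊆ b) ∧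
  (∃ b1 ∈ S, ∃ b2 ∈ S, ¬ b1 ⊆ b2 ∧ ¬ b2 ⊆ b1)

/-- **Proposition 33.** Under MD, SCD* and the boundary assumptions, if some nonempty
bundle b_r has the strictly largest sold-alone quantity and the top type values every
bundle not containing b_r strictly below b_r, then the minimal optimal menu is either
a tree menu or a nested menu. -/
theorem stmt11 {n : ℕ} (hn : 1 ≤ n) (t0 t1 : ℝ) (ht : t0 < t1)
    (φ : Bundle n → ℝ → ℝ)
    (hcont : ∀ b : Bundle n, ContinuousOn (φ b) (Set.Icc t0 t1))
    (hdist : Distinct φ t0 t1)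
    (hmd : MD φ t0 t1)
    (hscd : SCDstar φ t0 t1)
    (hempty : ∀ t ∈ Set.Icc t0 t1, φ (∅ : Bundle n) t = 0)
    (hneg : ∀ b : Bundle n, b ≠ ∅ → φ b t0 < 0)
    (hpos : ∀ b : Bundle n, b ≠ ∅ → 0 < φ b t1)
    (tz : Bundle n → ℝ)
    (htz_mem : ∀ b : Bundle n, b ≠ ∅ → tz b ∈ Set.Ioo t0 t1)
    (htz_zero : ∀ b : Bundle n, b ≠ ∅ → φ b (tz b) = 0)
    (htz_uniq : ∀ b : Bundle n, b ≠ ∅ → ∀ s ∈ Set.Icc t0 t1, φ b s = 0 → s = tz b)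
    (br : Bundle n) (hbr : br ≠ ∅)
    (hroot1 : ∀ b : Bundle n, b ≠ ∅ → b ≠ br → tz br < tz b)
    (hroot2 : ∀ b : Bundle n, ¬ br ⊆ b → φ b t1 < φ br t1) :
    ∀ S : Finset (Bundle n), MinimalOptimalMenu φ t0 t1 S →
      IsTreeMenu S ∨ IsNestedMenu S := by
  intro S hS
  by_cases hnest : IsNestedMenu S
  · exact Or.inr hnest
  left
  -- Lemma A: a nonempty bundle has negative virtual value strictly before its zero.
  have hA : ∀ b : Bundle n, b ≠ ∅ → ∀ s ∈ Set.Icc t0 t1, s < tz b → φ b s < 0 := by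
    intro b hb s hs hslt
    by_contra h
    push_neg at h
    rcases eq_or_lt_of_le h with heq | hlt
    · exact (ne_of_lt hslt) (htz_uniq b hb s hs heq.symm)
    · have hsub : Set.Icc t0 s ⊆ Set.Icc t0 t1 := Set.Icc_subset_Icc le_rfl hs.2
      obtain ⟨c, hc, hc0⟩ := intermediate_value_Icc hs.1 ((hcont b).mono hsub)
        ⟨le_of_lt (hneg b hb), le_of_lt hlt⟩
      have hceq := htz_uniq b hb c ⟨hc.1, le_trans hc.2 hs.2⟩ hc0
      exact (ne_of_lt (lt_of_le_of_lt hc.2 hslt)) hceq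
  -- Lemma B: br has positive virtual value strictly after its zero.
  have hB : ∀ s ∈ Set.Icc t0 t1, tz br < s → 0 < φ br s := by
    intro s hs hlt
    by_contra h
    push_neg at h
    rcases eq_or_lt_of_le h with heq | hlt2
    · exact (ne_of_gt hlt) (htz_uniq br hbr s hs heq)
    · have hsub : Set.Icc s t1 ⊆ Set.Icc t0 t1 := Set.Icc_subset_Icc hs.1 le_rfl
      obtain ⟨c, hc, hc0⟩ := intermediate_value_Icc hs.2 ((hcont br).mono hsub)
        ⟨le_of_lt hlt2, le_of_lt (hpos br hbr)⟩
      have hceq := htz_uniq br hbr c ⟨le_trans hs.1 hc.1, hc.2⟩ hc0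
      exact (ne_of_gt (lt_of_lt_of_le hlt hc.1)) hceq
  have hzbr := htz_mem br hbr
  have hzmem : tz br ∈ Set.Icc t0 t1 := ⟨le_of_lt hzbr.1, le_of_lt hzbr.2⟩
  -- construct a type t* where br is the unique maximizer
  set sF : Finset (Bundle n) := Finset.univ.filter (fun b => b ≠ ∅ ∧ b ≠ br) with hsF
  set M : ℝ := (insert t1 (sF.image tz)).min' (Finset.insert_nonempty t1 _) with hM
  have hM_le : M ≤ t1 := Finset.min'_le _ _ (Finset.mem_insert_self _ _)
  have hM_gt : tz br < M := by
    rw [hM, Finset.lt_min'_iff]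
    intro y hy
    rcases Finset.mem_insert.mp hy with h | h
    · exact h ▸ hzbr.2
    · obtain ⟨b, hbmem, rfl⟩ := Finset.mem_image.mp h
      rw [hsF, Finset.mem_filter] at hbmem
      exact hroot1 b hbmem.2.1 hbmem.2.2
  set ts : ℝ := (tz br + M) / 2 with hts
  have hts1 : tz br < ts := by rw [hts]; linarith
  have hts2 : ts < M := by rw [hts]; linarith
  have htsmem : ts ∈ Set.Icc t0 t1 := ⟨by linarith [hzbr.1], by linarith⟩
  have hbrpos : 0 < φ br ts := hB ts htsmem hts1
  have hstrict : ∀ b : Bundle n, b ≠ br → φ b ts < φ br ts := by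
    intro b hbne
    by_cases hb0 : b = ∅
    · rw [hb0, hempty ts htsmem]; exact hbrpos
    · have hbmem : b ∈ sF := by
        rw [hsF, Finset.mem_filter]; exact ⟨Finset.mem_univ _, hb0, hbne⟩
      have : M ≤ tz b := Finset.min'_le _ _ (Finset.mem_insert_of_mem (Finset.mem_image_of_mem tz hbmem))
      exact lt_trans (hA b hb0 ts htsmem (lt_of_lt_of_le hts2 this)) hbrpos
  -- br ∈ S
  have hbrS : br ∈ S := by
    obtain ⟨w, hwS, hw⟩ := hS.1 ts htsmem
    by_cases hwbr : w = br
    · exact hwbr ▸ hwS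
    · exact absurd (hw br) (not_le_of_gt (hstrict w hwbr))
  -- every nonempty element of S contains br
  have hroot : ∀ b ∈ S, b ≠ (∅ : Bundle n) → br ⊆ b := by
    intro b hbS hbne
    by_contra hnsub
    have hbnebr : b ≠ br := fun h => hnsub (h ▸ subset_rfl)
    have hbz : φ b (tz br) < 0 := hA b hbne (tz br) hzmem (hroot1 b hbne hbnebr)
    have hg1 : 0 < φ br (tz br) - φ b (tz br) := by
      rw [htz_zero br hbr]; linarith
    have hg2 : 0 < φ br t1 - φ b t1 := by linarith [hroot2 b hnsub]
    have h1mem : t1 ∈ Set.Icc t0 t1 := ⟨le_of_lt ht, le_rfl⟩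
    have hnevermax : ∀ t ∈ Set.Icc t0 t1, ∃ b' : Bundle n, φ b t < φ b' t := by
      intro t htmem
      by_cases hle : t ≤ tz br
      · refine ⟨∅, ?_⟩
        rw [hempty t htmem]
        exact hA b hbne t htmem (lt_of_le_of_lt hle (hroot1 b hbne hbnebr))
      · push_neg at hle
        refine ⟨br, ?_⟩
        rcases hmd br b with hmono | hanti
        · have := hmono hzmem htmem (le_of_lt hle)
          simp only at this; linarith
        · have := hanti htmem h1mem htmem.2
          simp only at this; linarith
    have hopt : OptimalMenu φ t0 t1 (S.erase b) := by
      intro t htmem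
      obtain ⟨w, hwS, hw⟩ := hS.1 t htmem
      refine ⟨w, Finset.mem_erase.mpr ⟨?_, hwS⟩, hw⟩
      intro hwb
      obtain ⟨b', hb'⟩ := hnevermax t htmem
      exact absurd (hw b') (by rw [hwb]; exact not_le_of_gt hb')
    exact hS.2 (S.erase b) (Finset.erase_ssubset hbS) hopt
  -- conclude tree menu
  rw [IsNestedMenu] at hnest
  push_neg at hnest
  obtain ⟨b1, hb1, b2, hb2, h12, h21⟩ := hnest
  exact ⟨⟨br, hbrS, hbr, hroot⟩, b1, hb1, b2, hb2, h12, h21⟩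

end Paper
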